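/- Let H, K be complex Hilbert spaces, (X,μ) and (Y,μ') measure spaces, ρ : Y → X a measurable bijection such that the pushforward of μ' under ρ equals μ, T : H → K a bounded linear bijection with bounded inverse, and τ : Y → ℂ measurable with |τ(y)| = 1 for all y. Let Ψ, Φ : X → H be weakly measurable and define Ψ̃(y) := τ(y)·T(Ψ(ρ(y))) and Φ̃(y) := τ(y)·T(Φ(ρ(y))). Then (Ψ,Φ) is a reproducing pair for H with respect to (X,μ) if and only if (Ψ̃,Φ̃) is a reproducing pair for K with respect to (Y,μ'). -/

import Mathlib

open MeasureTheory ContinuousLinearMap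
open scoped InnerProductSpace

noncomputable def adjEquiv {H K : Type*} [NormedAddCommGroup H] [InnerProductSpace ℂ H]
    [CompleteSpace H] [NormedAddCommGroup K] [InnerProductSpace ℂ K] [CompleteSpace K]
    (T : H ≃L[ℂ] K) : K ≃L[ℂ] H :=
  ContinuousLinearEquiv.equivOfInverse (adjoint (T : H →L[ℂ] K)) (adjoint (T.symm : K →L[ℂ] H))
    (fun x => by
      have h : (T : H →L[ℂ] K) ∘L (T.symm : K →L[ℂ] H) = ContinuousLinearMap.id ℂ K := by
        ext v; simp
      have := congrFun (congrArg (fun A => (DFunLike.coe A : K → K)) (by rw [← adjoint_comp, h, adjoint_id] :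
        adjoint (T.symm : K →L[ℂ] H) ∘L adjoint (T : H →L[ℂ] K) = ContinuousLinearMap.id ℂ K)) x
      simpa using this)
    (fun x => by
      have h : (T.symm : K →L[ℂ] H) ∘L (T : H →L[ℂ] K) = ContinuousLinearMap.id ℂ H := by
        ext v; simp
      have := congrFun (congrArg (fun A => (DFunLike.coe A : H → H)) (by rw [← adjoint_comp, h, adjoint_id] :
        adjoint (T : H →L[ℂ] K) ∘L adjoint (T.symm : K →L[ℂ] H) = ContinuousLinearMap.id ℂ H)) x
      simpa using this)

@[simp] lemma adjEquiv_apply {H K : Type*} [NormedAddCommGroup H] [InnerProductSpace ℂ H]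
    [CompleteSpace H] [NormedAddCommGroup K] [InnerProductSpace ℂ K] [CompleteSpace K]
    (T : H ≃L[ℂ] K) (x : K) : adjEquiv T x = adjoint (T : H →L[ℂ] K) x := rfl

@[simp] lemma adjEquiv_symm_apply {H K : Type*} [NormedAddCommGroup H] [InnerProductSpace ℂ H]
    [CompleteSpace H] [NormedAddCommGroup K] [InnerProductSpace ℂ K] [CompleteSpace K]
    (T : H ≃L[ℂ] K) (x : H) : (adjEquiv T).symm x = adjoint (T.symm : K →L[ℂ] H) x := rfl

/-- Reproducing pairs are stable under measure-space isomorphism,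
unimodular weight and bounded invertible operators:
`(Ψ,Φ)` is a reproducing pair for `H` w.r.t. `(X,μ)` iff
`(Ψ̃,Φ̃)`, with `Ψ̃(y) = τ(y) • T (Ψ (ρ y))` and `Φ̃(y) = τ(y) • T (Φ (ρ y))`,
is a reproducing pair for `K` w.r.t. `(Y,μ')`. -/
theorem stmt_0
    {H K : Type*} [NormedAddCommGroup H] [InnerProductSpace ℂ H] [CompleteSpace H]
    [NormedAddCommGroup K] [InnerProductSpace ℂ K] [CompleteSpace K]
    {X Y : Type*} [MeasurableSpace X] [MeasurableSpace Y]
    (μ : Measure X) (μ' : Measure Y)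
    (ρ : Y → X) (hρ_meas : Measurable ρ) (hρ_bij : Function.Bijective ρ)
    (hρ_push : μ'.map ρ = μ)
    (T : H ≃L[ℂ] K)
    (τ : Y → ℂ) (hτ_meas : Measurable τ) (hτ_mod : ∀ y, ‖τ y‖ = 1)
    (Ψ Φ : X → H)
    (hΨ : ∀ f : H, Measurable fun x => ⟪f, Ψ x⟫_ℂ)
    (hΦ : ∀ f : H, Measurable fun x => ⟪f, Φ x⟫_ℂ) :
    (∃ C : H ≃L[ℂ] H, ∀ f g : H,
        ⟪C f, g⟫_ℂ = ∫ x, ⟪f, Ψ x⟫_ℂ * ⟪Φ x, g⟫_ℂ ∂μ) ↔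
    (∃ C : K ≃L[ℂ] K, ∀ f g : K,
        ⟪C f, g⟫_ℂ
          = ∫ y, ⟪f, τ y • T (Ψ (ρ y))⟫_ℂ * ⟪τ y • T (Φ (ρ y)), g⟫_ℂ ∂μ') := by
  set T' : H →L[ℂ] K := (T : H →L[ℂ] K) with hT'
  -- measurability of the transported integrand
  have hmeas : ∀ u v : H, AEStronglyMeasurable (fun x => ⟪u, Ψ x⟫_ℂ * ⟪Φ x, v⟫_ℂ) (μ'.map ρ) := by
    intro u v
    have h2 : Measurable fun x => ⟪Φ x, v⟫_ℂ := by
      have h3 : (fun x => ⟪Φ x, v⟫_ℂ) = fun x => (starRingEnd ℂ) ⟪v, Φ x⟫_ℂ := by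
        funext x; rw [inner_conj_symm]
      rw [h3]
      exact (Complex.continuous_conj.measurable).comp (hΦ v)
    exact ((hΨ u).mul h2).aestronglyMeasurable
  -- key change-of-variables identity
  have key : ∀ f g : K,
      (∫ y, ⟪f, τ y • T (Ψ (ρ y))⟫_ℂ * ⟪τ y • T (Φ (ρ y)), g⟫_ℂ ∂μ')
        = ∫ x, ⟪adjoint T' f, Ψ x⟫_ℂ * ⟪Φ x, adjoint T' g⟫_ℂ ∂μ := by
    intro f g
    have h1 : ∀ y, ⟪f, τ y • T (Ψ (ρ y))⟫_ℂ * ⟪τ y • T (Φ (ρ y)), g⟫_ℂ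
        = ⟪adjoint T' f, Ψ (ρ y)⟫_ℂ * ⟪Φ (ρ y), adjoint T' g⟫_ℂ := by
      intro y
      have hmod : τ y * (starRingEnd ℂ) (τ y) = 1 := by
        rw [Complex.mul_conj]
        norm_cast
        simp [Complex.normSq_eq_norm_sq, hτ_mod y]
      have hl : ⟪f, T (Ψ (ρ y))⟫_ℂ = ⟪adjoint T' f, Ψ (ρ y)⟫_ℂ := by
        rw [adjoint_inner_left]; rfl
      have hr : ⟪T (Φ (ρ y)), g⟫_ℂ = ⟪Φ (ρ y), adjoint T' g⟫_ℂ := by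
        rw [adjoint_inner_right]; rfl
      rw [inner_smul_right, inner_smul_left, ← hl, ← hr]
      calc τ y * ⟪f, T (Ψ (ρ y))⟫_ℂ * ((starRingEnd ℂ) (τ y) * ⟪T (Φ (ρ y)), g⟫_ℂ)
          = (τ y * (starRingEnd ℂ) (τ y)) * (⟪f, T (Ψ (ρ y))⟫_ℂ * ⟪T (Φ (ρ y)), g⟫_ℂ) := by ring
        _ = ⟪f, T (Ψ (ρ y))⟫_ℂ * ⟪T (Φ (ρ y)), g⟫_ℂ := by rw [hmod, one_mul]
    simp_rw [h1]
    rw [← hρ_push, integral_map hρ_meas.aemeasurable (hmeas _ _)]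
  constructor
  · rintro ⟨C, hC⟩
    refine ⟨(adjEquiv T).trans (C.trans T), fun f g => ?_⟩
    rw [key f g]
    have : ⟪((adjEquiv T).trans (C.trans T)) f, g⟫_ℂ = ⟪C (adjoint T' f), adjoint T' g⟫_ℂ := by
      simp only [ContinuousLinearEquiv.trans_apply, adjEquiv_apply]
      rw [adjoint_inner_right T']
      rfl
    rw [this, hC]
  · rintro ⟨C, hC⟩
    refine ⟨(adjEquiv T).symm.trans (C.trans T.symm), fun f g => ?_⟩
    have h1 : ⟪((adjEquiv T).symm.trans (C.trans T.symm)) f, g⟫_ℂ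
        = ⟪C ((adjEquiv T).symm f), (adjEquiv T).symm g⟫_ℂ := by
      simp only [ContinuousLinearEquiv.trans_apply, adjEquiv_symm_apply]
      rw [adjoint_inner_right (T.symm : K →L[ℂ] H)]
      rfl
    rw [h1, hC, key]
    congr 1
    ext x
    have hu : adjoint T' ((adjEquiv T).symm f) = f := (adjEquiv T).apply_symm_apply f
    have hv : adjoint T' ((adjEquiv T).symm g) = g := (adjEquiv T).apply_symm_apply g
    rw [hu, hv]
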